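/- Let Σ, Σ_1, Σ_z be symmetric positive definite d×d matrices and n > d. Define G(Σ_1) = (1 + (1/(n-d)) Tr[(Σ+Σ_1)^{-1}(Σ+Σ_z)]) (Tr[Σ] - Tr[(Σ+Σ_1)^{-1}Σ^2]) + Tr[(Σ+Σ_1)^{-1}(Σ_z - Σ_1)(Σ+Σ_1)^{-1}Σ^2]. Then G(Σ_z) = (n/(n-d))(Tr[Σ] - Tr[(Σ+Σ_z)^{-1}Σ^2]) when Σ and Σ_z commute, and in particular G(Σ_z) ≥ Tr[Σ] - Tr[(Σ+Σ_z)^{-1}Σ^2], with equality iff Tr[Σ] = Tr[(Σ+Σ_z)^{-1}Σ^2]. -/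

import Mathlib

open Matrix

lemma trace_nonneg_of_posSemidef {m : Type*} [Fintype m] [DecidableEq m] {A : Matrix m m ℝ}
    (hA : A.PosSemidef) : 0 ≤ A.trace := by
  exact hA.trace_nonneg

lemma inv_sub_inv_posSemidef {d : ℕ} {A S : Matrix (Fin d) (Fin d) ℝ}
    (hA : A.PosDef) (hS : S.PosDef) (h : (A - S).PosSemidef) :
    (S⁻¹ - A⁻¹).PosSemidef := by
  letI := hA.isUnit.invertible
  letI := hS.isUnit.invertible
  letI := hS.inv.isUnit.invertible
  have h1 : (fromBlocks A 1 (1 : Matrix (Fin d) (Fin d) ℝ)ᴴ S⁻¹).PosSemidef := by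
    rw [PosDef.fromBlocks₂₂ A 1 hS.inv, Matrix.inv_inv_of_invertible,
      conjTranspose_one, Matrix.mul_one, Matrix.one_mul]
    exact h
  have h2 := (PosDef.fromBlocks₁₁ (1 : Matrix (Fin d) (Fin d) ℝ) S⁻¹ hA).mp h1
  simpa using h2

/-- For commuting positive definite `S`, `Sz` and `n > d`, the Theorem 1 error formula
`G(S₁)` evaluated at `S₁ = Sz` equals `n/(n-d)` times the Wiener error
`Tr[S] - Tr[(S+Sz)⁻¹S²]`; in particular `G(Sz)` is at least the Wiener error, with
equality iff `Tr[S] = Tr[(S+Sz)⁻¹S²]`. -/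
theorem G_at_sigma_z
    (d n : ℕ) (hnd : d < n)
    (S Sz : Matrix (Fin d) (Fin d) ℝ)
    (hS : S.PosDef) (hSz : Sz.PosDef)
    (hcomm : S * Sz = Sz * S)
    (G : Matrix (Fin d) (Fin d) ℝ → ℝ)
    (hG : ∀ S₁ : Matrix (Fin d) (Fin d) ℝ,
      G S₁ = (1 + (1 / ((n : ℝ) - d)) * Matrix.trace ((S + S₁)⁻¹ * (S + Sz)))
          * (Matrix.trace S - Matrix.trace ((S + S₁)⁻¹ * S ^ 2))
        + Matrix.trace ((S + S₁)⁻¹ * (Sz - S₁) * (S + S₁)⁻¹ * S ^ 2)) :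
    G Sz = ((n : ℝ) / ((n : ℝ) - d))
        * (Matrix.trace S - Matrix.trace ((S + Sz)⁻¹ * S ^ 2))
    ∧ Matrix.trace S - Matrix.trace ((S + Sz)⁻¹ * S ^ 2) ≤ G Sz
    ∧ (G Sz = Matrix.trace S - Matrix.trace ((S + Sz)⁻¹ * S ^ 2)
        ↔ Matrix.trace S = Matrix.trace ((S + Sz)⁻¹ * S ^ 2)) := by
  have hA : (S + Sz).PosDef := hS.add hSz
  set A := S + Sz with hAdef
  set W := Matrix.trace S - Matrix.trace (A⁻¹ * S ^ 2) with hWdef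
  have hdn : (0:ℝ) < (n : ℝ) - d := by
    have : (d:ℝ) < n := by exact_mod_cast hnd
    linarith
  -- trace of A⁻¹ * A = d
  have htr : Matrix.trace (A⁻¹ * A) = (d:ℝ) := by
    rw [Matrix.nonsing_inv_mul A (isUnit_iff_ne_zero.mpr hA.det_pos.ne'), Matrix.trace_one]
    simp
  -- last term vanishes
  have hzero : A⁻¹ * (Sz - Sz) * A⁻¹ * S ^ 2 = 0 := by
    rw [sub_self, Matrix.mul_zero, Matrix.zero_mul, Matrix.zero_mul]
  -- G Sz value
  have hGz : G Sz = ((n : ℝ) / ((n : ℝ) - d)) * W := by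
    rw [hG Sz, ← hAdef, htr, hzero, Matrix.trace_zero, add_zero, ← hWdef]
    field_simp
    ring
  -- W ≥ 0
  have hW : 0 ≤ W := by
    have hsub : (A - S).PosSemidef := by
      have : A - S = Sz := by rw [hAdef]; abel
      rw [this]; exact hSz.posSemidef
    have hpsd := (inv_sub_inv_posSemidef hA hS hsub).conjTranspose_mul_mul_same S
    have h0 := trace_nonneg_of_posSemidef hpsd
    have hrw : Sᴴ * (S⁻¹ - A⁻¹) * S = S * S⁻¹ * S - S * A⁻¹ * S := by
      rw [hS.isHermitian.eq, Matrix.mul_sub, Matrix.sub_mul]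
    rw [hrw] at h0
    rw [Matrix.trace_sub, Matrix.mul_nonsing_inv S (isUnit_iff_ne_zero.mpr hS.det_pos.ne'),
      Matrix.one_mul, Matrix.trace_mul_cycle S A⁻¹ S,
      Matrix.trace_mul_comm (S * S) A⁻¹, ← pow_two] at h0
    exact h0
  refine ⟨hGz, ?_, ?_⟩
  · rw [hGz]
    have h1 : (1:ℝ) ≤ (n : ℝ) / ((n : ℝ) - d) := by
      rw [le_div_iff₀ hdn]
      have : (0:ℝ) ≤ (d:ℝ) := Nat.cast_nonneg d
      linarith
    calc W = 1 * W := (one_mul W).symm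
      _ ≤ ((n : ℝ) / ((n : ℝ) - d)) * W := mul_le_mul_of_nonneg_right h1 hW
  · rw [hGz]
    constructor
    · intro h
      rcases Nat.eq_zero_or_pos d with hd | hd
      · subst hd
        simp [Matrix.trace]
      · have heq : ((n : ℝ) / ((n : ℝ) - d) - 1) * W = 0 := by
          rw [sub_mul, one_mul, h]; exact sub_self W
        have hne : (n : ℝ) / ((n : ℝ) - d) - 1 ≠ 0 := by
          have hd' : (0:ℝ) < (d:ℝ) := by exact_mod_cast hd
          have : (1:ℝ) < (n : ℝ) / ((n : ℝ) - d) := by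
            rw [lt_div_iff₀ hdn]; linarith
          linarith
        have hW0 : W = 0 := by
          rcases mul_eq_zero.mp heq with h' | h'
          · exact absurd h' hne
          · exact h'
        have := sub_eq_zero.mp hW0
        exact this
    · intro h
      have hW0 : W = 0 := by rw [hWdef, h, sub_self]
      rw [hW0, mul_zero]
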